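/- Let p ≥ 5 be a prime, d = (p−1)/2, and let c be an integer with 1 ≤ c ≤ d−1. Then (1/2)·(D_2^{(2c)}(p) − δ_2^{(2c)}(p)) = (1/24)·c·(p−1)·(p−2c−1)·(p−c−1). -/

import Mathlib

/-- The Verlinde formula
`D_g^{(2c)}(p) = (p/4)^{g-1} · Σ_{j=1}^{d} sin(πj(2c+1)/p) · (sin(πj/p))^{1-2g}`. -/
noncomputable def Dverl (g c p : ℕ) : ℝ :=
  ((p : ℝ) / 4) ^ (g - 1) *
    ∑ j ∈ Finset.Icc 1 ((p - 1) / 2),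
      Real.sin (Real.pi * j * (2 * c + 1) / p) *
        Real.sin (Real.pi * j / p) ^ (1 - 2 * (g : ℤ))

/-- The companion formula
`δ_g^{(2c)}(p) = (-1)^c · (4^{1-g}/p) · Σ_{j=1}^{d} sin(πj(2c+1)/p) · sin(πj/p) · (cos(πj/p))^{-2g}`. -/
noncomputable def deltaVerl (g c p : ℕ) : ℝ :=
  (-1) ^ c * ((4 : ℝ) ^ (1 - (g : ℤ)) / p) *
    ∑ j ∈ Finset.Icc 1 ((p - 1) / 2),
      Real.sin (Real.pi * j * (2 * c + 1) / p) * Real.sin (Real.pi * j / p) *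
        Real.cos (Real.pi * j / p) ^ (-(2 * (g : ℤ)))

open Finset Real


lemma L0 (p j : ℕ) (hj1 : 1 ≤ j) (hj2 : j < p) :
    ∑ k ∈ range p, Real.cos (2 * k * (Real.pi * j / p)) = 0 := by
  have hp0 : 0 < p := lt_of_le_of_lt (Nat.zero_le j) hj2
  have hp : (0:ℝ) < p := by exact_mod_cast hp0
  have hpC : (p : ℂ) ≠ 0 := by exact_mod_cast hp.ne'
  set θ : ℝ := 2 * Real.pi * j / p with hθ
  set z : ℂ := Complex.exp (θ * Complex.I) with hz
  have hzk : ∀ k : ℕ, Real.cos (2 * k * (Real.pi * j / p)) = (z ^ k).re := by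
    intro k
    rw [hz, ← Complex.exp_nat_mul]
    have : (k : ℂ) * (↑θ * Complex.I) = ((k * θ : ℝ) : ℂ) * Complex.I := by
      push_cast; ring
    rw [this, Complex.exp_ofReal_mul_I_re]
    congr 1
    rw [hθ]; ring
  have hz1 : z ≠ 1 := by
    rw [hz, Ne, Complex.exp_eq_one_iff]
    rintro ⟨n, hn⟩
    have h2 : ((θ : ℂ) - n * (2 * Real.pi)) * Complex.I = 0 := by
      rw [sub_mul, hn]; ring
    have h3 : (θ : ℂ) = n * (2 * Real.pi) := by
      have := mul_eq_zero.mp h2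
      rcases this with h | h
      · linear_combination h
      · exact absurd h Complex.I_ne_zero
    have hreal : θ = n * (2 * Real.pi) := by exact_mod_cast h3
    rw [hθ] at hreal
    have hjnp : (j : ℝ) = n * p := by
      have hπ : (0:ℝ) < Real.pi := Real.pi_pos
      field_simp at hreal
      nlinarith [hreal]
    have h0 : (1:ℝ) ≤ j := by exact_mod_cast hj1
    have h1 : (j:ℝ) < p := by exact_mod_cast hj2
    rcases le_or_gt n 0 with h | h
    · have : (n:ℝ) * p ≤ 0 := mul_nonpos_of_nonpos_of_nonneg (by exact_mod_cast h) hp.le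
      linarith
    · have hn1 : (1:ℝ) ≤ n := by exact_mod_cast h
      nlinarith
  have hzp : z ^ p = 1 := by
    rw [hz, ← Complex.exp_nat_mul, Complex.exp_eq_one_iff]
    refine ⟨j, ?_⟩
    rw [hθ]
    push_cast
    field_simp
  calc ∑ k ∈ range p, Real.cos (2 * k * (Real.pi * j / p))
      = (∑ k ∈ range p, z ^ k).re := by rw [Complex.re_sum]; exact sum_congr rfl fun k _ => hzk k
    _ = 0 := by rw [geom_sum_eq hz1, hzp]; simp
lemma reflect_sum (d : ℕ) (f : ℕ → ℝ) (h : ∀ j, 1 ≤ j → j ≤ d → f (2*d+1-j) = f j) :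
    ∑ j ∈ Icc 1 (2*d), f j = 2 * ∑ j ∈ Icc 1 d, f j := by
  have hsplit : Icc 1 (2*d) = Icc 1 d ∪ Icc (d+1) (2*d) := by
    ext x; simp; omega
  have hdisj : Disjoint (Icc 1 d) (Icc (d+1) (2*d)) := by
    simp [Finset.disjoint_left]; intro a h1 h2; omega
  rw [hsplit, Finset.sum_union hdisj]
  have key : ∑ j ∈ Icc (d+1) (2*d), f j = ∑ j ∈ Icc 1 d, f j := by
    apply Finset.sum_nbij' (fun j => 2*d+1-j) (fun j => 2*d+1-j)
    · intro a ha; simp at ha ⊢; omega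
    · intro a ha; simp at ha ⊢; omega
    · intro a ha; simp at ha; omega
    · intro a ha; simp at ha; omega
    · intro a ha; simp at ha
      have h2 := (h (2*d+1-a) (by omega) (by omega)).symm
      rw [show 2*d+1-(2*d+1-a) = a by omega] at h2; exact h2.symm
  rw [key]; ring

lemma cos_half (d k : ℕ) (hk1 : 1 ≤ k) (hk2 : k ≤ 2*d) :
    ∑ j ∈ Icc 1 d, Real.cos (2*k*(Real.pi*j/(2*d+1))) = -(1/2) := by
  have h0 := L0 (2*d+1) k hk1 (by omega)
  push_cast at h0
  have hins : range (2*d+1) = insert 0 (Icc 1 (2*d)) := by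
    ext x; simp; omega
  rw [hins, Finset.sum_insert (by simp)] at h0
  rw [show ((0:ℕ):ℝ) = 0 by norm_num] at h0
  rw [show (2:ℝ)*0*(Real.pi*k/(2*d+1)) = 0 by ring, Real.cos_zero] at h0
  have hsym : ∀ j, 1 ≤ j → j ≤ d →
      Real.cos (2*((2*d+1-j : ℕ):ℝ)*(Real.pi*k/(2*d+1))) = Real.cos (2*(j:ℝ)*(Real.pi*k/(2*d+1))) := by
    intro j h1 h2
    have hcast : ((2*d+1-j : ℕ):ℝ) = 2*(d:ℝ)+1-j := by
      have hle : j ≤ 2*d+1 := by omega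
      push_cast [hle]; ring
    rw [hcast]
    have hne : (2*(d:ℝ)+1) ≠ 0 := by positivity
    have harg : 2*(2*(d:ℝ)+1-j)*(Real.pi*k/(2*d+1)) = k*(2*Real.pi) - 2*j*(Real.pi*k/(2*d+1)) := by
      field_simp
    rw [harg, Real.cos_nat_mul_two_pi_sub]
  have hrefl := reflect_sum d (fun j => Real.cos (2*(j:ℝ)*(Real.pi*k/(2*d+1)))) hsym
  have hcomm : ∀ j : ℕ, Real.cos (2*(j:ℝ)*(Real.pi*k/(2*d+1))) = Real.cos (2*(k:ℝ)*(Real.pi*j/(2*d+1))) := by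
    intro j; congr 1; ring
  simp only [hcomm] at hrefl h0
  linarith
lemma L0' (d j : ℕ) (hj1 : 1 ≤ j) (hj2 : j ≤ 2*d) :
    ∑ k ∈ range (2*d+1), Real.cos (2*k*(Real.pi*j/(2*(d:ℝ)+1))) = 0 := by
  have h := L0 (2*d+1) j hj1 (by omega)
  push_cast at h
  convert h using 2

lemma sinpos (d j : ℕ) (h1 : 1 ≤ j) (h2 : j ≤ 2*d) : 0 < Real.sin (Real.pi*j/(2*(d:ℝ)+1)) := by
  have hd : (0:ℝ) < 2*(d:ℝ)+1 := by positivity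
  have hj0 : (1:ℝ) ≤ j := by exact_mod_cast h1
  have hj1 : (j:ℝ) < 2*(d:ℝ)+1 := by
    have : (j:ℝ) ≤ 2*(d:ℝ) := by exact_mod_cast h2
    linarith
  apply Real.sin_pos_of_pos_of_lt_pi
  · positivity
  · rw [div_lt_iff₀ hd]
    nlinarith [Real.pi_pos]

lemma cospos (d j : ℕ) (h1 : 1 ≤ j) (h2 : j ≤ d) : 0 < Real.cos (Real.pi*j/(2*(d:ℝ)+1)) := by
  have hd : (0:ℝ) < 2*(d:ℝ)+1 := by positivity
  have hj1 : (j:ℝ) ≤ (d:ℝ) := by exact_mod_cast h2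
  apply Real.cos_pos_of_mem_Ioo
  constructor
  · have : (0:ℝ) < Real.pi*j/(2*(d:ℝ)+1) ∨ (0:ℝ) = Real.pi*j/(2*(d:ℝ)+1) := by
      rcases eq_or_lt_of_le (by positivity : (0:ℝ) ≤ Real.pi*j/(2*(d:ℝ)+1)) with h | h
      · right; exact h
      · left; exact h
    have hpi : 0 < Real.pi := Real.pi_pos
    have : (0:ℝ) ≤ Real.pi*j/(2*(d:ℝ)+1) := by positivity
    linarith [Real.pi_pos]
  · rw [div_lt_iff₀ hd]
    nlinarith [Real.pi_pos]

lemma dirichlet (c : ℕ) (x : ℝ) :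
    Real.sin ((2*(c:ℝ)+1)*x) = Real.sin x * (1 + 2 * ∑ k ∈ Icc 1 c, Real.cos (2*k*x)) := by
  induction c with
  | zero => simp
  | succ n ih =>
    rw [Finset.sum_Icc_succ_top (by omega)]
    push_cast
    rw [show (2*((n:ℝ)+1)+1)*x = (2*(n:ℝ)+1)*x + (x + x) by ring, Real.sin_add,
        Real.sin_add, Real.cos_add,
        show (2*((n:ℝ)+1))*x = ((2*(n:ℝ)+1)*x) + x by ring, Real.cos_add]
    linear_combination ih + Real.sin ((2*(n:ℝ)+1)*x) * (Real.sin_sq_add_cos_sq x)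

lemma sum_id (n : ℕ) : ∑ k ∈ range n, (k:ℝ) = n*((n:ℝ)-1)/2 := by
  induction n with
  | zero => simp
  | succ m ih => rw [Finset.sum_range_succ, ih]; push_cast; ring

lemma sum_sq (n : ℕ) : ∑ k ∈ range n, (k:ℝ)^2 = n*((n:ℝ)-1)*(2*(n:ℝ)-1)/6 := by
  induction n with
  | zero => simp
  | succ m ih => rw [Finset.sum_range_succ, ih]; push_cast; ring

lemma sum_Icc_id (n : ℕ) : ∑ k ∈ Icc 1 n, (k:ℝ) = n*((n:ℝ)+1)/2 := by
  induction n with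
  | zero => simp
  | succ m ih => rw [Finset.sum_Icc_succ_top (by omega), ih]; push_cast; ring

lemma sum_Icc_sq (n : ℕ) : ∑ k ∈ Icc 1 n, (k:ℝ)^2 = n*((n:ℝ)+1)*(2*(n:ℝ)+1)/6 := by
  induction n with
  | zero => simp
  | succ m ih => rw [Finset.sum_Icc_succ_top (by omega), ih]; push_cast; ring
noncomputable def Ah (d k : ℕ) : ℝ :=
  ∑ j ∈ Icc 1 d, Real.cos (2*k*(Real.pi*j/(2*(d:ℝ)+1))) / Real.sin (Real.pi*j/(2*(d:ℝ)+1))^2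

lemma A_step (d k : ℕ) (hd : 1 ≤ d) (hk : k + 1 ≤ 2*d) :
    Ah d (k+1) = Ah d k - 2*(d:ℝ) + 2*k := by
  have key : ∀ j ∈ Icc 1 d,
      Real.cos (2*((k:ℝ)+1)*(Real.pi*j/(2*(d:ℝ)+1))) / Real.sin (Real.pi*j/(2*(d:ℝ)+1))^2
      = Real.cos (2*(k:ℝ)*(Real.pi*j/(2*(d:ℝ)+1))) / Real.sin (Real.pi*j/(2*(d:ℝ)+1))^2
        + (-2) * (1 + 2 * ∑ m ∈ Icc 1 k, Real.cos (2*m*(Real.pi*j/(2*(d:ℝ)+1)))) := by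
    intro j hj
    simp only [Finset.mem_Icc] at hj
    set x : ℝ := Real.pi*j/(2*(d:ℝ)+1) with hx
    have hs : Real.sin x ≠ 0 := (sinpos d j hj.1 (by omega)).ne'
    have h1 : Real.cos (2*((k:ℝ)+1)*x) = Real.cos ((2*(k:ℝ)+1)*x) * Real.cos x
        - Real.sin ((2*(k:ℝ)+1)*x) * Real.sin x := by
      rw [show 2*((k:ℝ)+1)*x = (2*(k:ℝ)+1)*x + x by ring, Real.cos_add]
    have h2 : Real.cos (2*(k:ℝ)*x) = Real.cos ((2*(k:ℝ)+1)*x) * Real.cos x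
        + Real.sin ((2*(k:ℝ)+1)*x) * Real.sin x := by
      rw [show 2*(k:ℝ)*x = (2*(k:ℝ)+1)*x - x by ring, Real.cos_sub]
    rw [h1, h2, dirichlet k x]
    field_simp
    ring
  unfold Ah
  push_cast
  rw [Finset.sum_congr rfl key, Finset.sum_add_distrib]
  have hswap : ∑ j ∈ Icc 1 d, (-2:ℝ) * (1 + 2 * ∑ m ∈ Icc 1 k, Real.cos (2*m*(Real.pi*j/(2*(d:ℝ)+1))))
      = -2*(d:ℝ) + 2*k := by
    have : ∀ j ∈ Icc 1 d, (-2:ℝ) * (1 + 2 * ∑ m ∈ Icc 1 k, Real.cos (2*m*(Real.pi*j/(2*(d:ℝ)+1))))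
        = -2 + (-4) * ∑ m ∈ Icc 1 k, Real.cos (2*m*(Real.pi*j/(2*(d:ℝ)+1))) := by
      intro j _; ring
    rw [Finset.sum_congr rfl this, Finset.sum_add_distrib, Finset.sum_const, ← Finset.mul_sum]
    rw [Finset.sum_comm]
    have hin : ∀ m ∈ Icc 1 k, ∑ j ∈ Icc 1 d, Real.cos (2*m*(Real.pi*j/(2*(d:ℝ)+1))) = -(1/2) := by
      intro m hm
      simp only [Finset.mem_Icc] at hm
      exact cos_half d m hm.1 (by omega)
    rw [Finset.sum_congr rfl hin, Finset.sum_const]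
    simp [Nat.card_Icc]
    ring
  rw [hswap]
  ring

lemma A_formula (d k : ℕ) (hd : 1 ≤ d) (hk : k ≤ 2*d) :
    Ah d k = Ah d 0 - k*(2*(d:ℝ)+1-k) := by
  induction k with
  | zero => simp
  | succ n ih =>
    rw [A_step d n hd (by omega), ih (by omega)]
    push_cast
    ring

lemma A_zero (d : ℕ) (hd : 1 ≤ d) : Ah d 0 = 2*(d:ℝ)*((d:ℝ)+1)/3 := by
  have hsum : ∑ k ∈ range (2*d+1), Ah d k = 0 := by
    unfold Ah
    rw [Finset.sum_comm]
    apply Finset.sum_eq_zero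
    intro j hj
    simp only [Finset.mem_Icc] at hj
    rw [← Finset.sum_div, L0' d j hj.1 (by omega)]
    simp
  have hform : ∀ k ∈ range (2*d+1), Ah d k = Ah d 0 - k*(2*(d:ℝ)+1-k) := by
    intro k hk
    simp only [Finset.mem_range] at hk
    exact A_formula d k hd (by omega)
  rw [Finset.sum_congr rfl hform, Finset.sum_sub_distrib, Finset.sum_const, card_range] at hsum
  have hexp : ∀ k ∈ range (2*d+1), (k:ℝ)*(2*(d:ℝ)+1-k) = (2*(d:ℝ)+1)*k - (k:ℝ)^2 := by
    intro k _; ring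
  rw [Finset.sum_congr rfl hexp, Finset.sum_sub_distrib, ← Finset.mul_sum, sum_id, sum_sq] at hsum
  have hd0 : (0:ℝ) < 2*(d:ℝ)+1 := by positivity
  have hcast : ((2*d+1 : ℕ):ℝ) = 2*(d:ℝ)+1 := by push_cast; ring
  rw [hcast] at hsum
  rw [nsmul_eq_mul] at hsum
  push_cast at hsum
  have hd0' : (2*(d:ℝ)+1) ≠ 0 := by positivity
  have h2 : (2*(d:ℝ)+1) * (Ah d 0 - 2*(d:ℝ)*((d:ℝ)+1)/3) = 0 := by linear_combination hsum
  rcases mul_eq_zero.mp h2 with h | h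
  · exact absurd h hd0'
  · linarith
lemma cos_rec (t x : ℝ) :
    Real.cos ((t+1)*x) = 2*Real.cos (t*x)*Real.cos x - Real.cos ((t-1)*x) := by
  rw [show (t+1)*x = t*x + x by ring, show (t-1)*x = t*x - x by ring,
      Real.cos_add, Real.cos_sub]
  ring

noncomputable def Kh (d k : ℕ) : ℝ :=
  ∑ j ∈ Icc 1 d, Real.cos ((2*(k:ℝ)+1)*(Real.pi*j/(2*(d:ℝ)+1))) / Real.cos (Real.pi*j/(2*(d:ℝ)+1))

noncomputable def Bh (d k : ℕ) : ℝ :=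
  ∑ j ∈ Icc 1 d, Real.cos (2*(k:ℝ)*(Real.pi*j/(2*(d:ℝ)+1))) / Real.cos (Real.pi*j/(2*(d:ℝ)+1))^2

noncomputable def Lh (d k : ℕ) : ℝ :=
  ∑ j ∈ Icc 1 d, Real.cos ((2*(k:ℝ)+1)*(Real.pi*j/(2*(d:ℝ)+1))) / Real.cos (Real.pi*j/(2*(d:ℝ)+1))^3

noncomputable def Ch (d k : ℕ) : ℝ :=
  ∑ j ∈ Icc 1 d, Real.cos (2*(k:ℝ)*(Real.pi*j/(2*(d:ℝ)+1))) / Real.cos (Real.pi*j/(2*(d:ℝ)+1))^4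

lemma K_formula (d k : ℕ) (hk : k ≤ 2*d) :
    Kh d k = ((-1:ℝ)^k*(2*(d:ℝ)+1) - 1)/2 := by
  induction k with
  | zero =>
    unfold Kh
    have : ∀ j ∈ Icc 1 d, Real.cos ((2*((0:ℕ):ℝ)+1)*(Real.pi*j/(2*(d:ℝ)+1)))
        / Real.cos (Real.pi*j/(2*(d:ℝ)+1)) = 1 := by
      intro j hj
      simp only [Finset.mem_Icc] at hj
      rw [show (2*((0:ℕ):ℝ)+1)*(Real.pi*j/(2*(d:ℝ)+1)) = Real.pi*j/(2*(d:ℝ)+1) by push_cast; ring]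
      exact div_self (cospos d j hj.1 hj.2).ne'
    rw [Finset.sum_congr rfl this, Finset.sum_const]
    simp [Nat.card_Icc]
  | succ n ih =>
    have key : ∀ j ∈ Icc 1 d, Real.cos ((2*((n:ℝ)+1)+1)*(Real.pi*j/(2*(d:ℝ)+1)))
        / Real.cos (Real.pi*j/(2*(d:ℝ)+1))
        = 2*Real.cos (2*((n:ℝ)+1)*(Real.pi*j/(2*(d:ℝ)+1)))
          - Real.cos ((2*(n:ℝ)+1)*(Real.pi*j/(2*(d:ℝ)+1))) / Real.cos (Real.pi*j/(2*(d:ℝ)+1)) := by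
      intro j hj
      simp only [Finset.mem_Icc] at hj
      set x : ℝ := Real.pi*j/(2*(d:ℝ)+1) with hx
      have hc : Real.cos x ≠ 0 := (cospos d j hj.1 hj.2).ne'
      have h := cos_rec (2*((n:ℝ)+1)) x
      rw [show 2*((n:ℝ)+1)+1 = 2*((n:ℝ)+1)+1 by ring] at h ⊢
      rw [show 2*((n:ℝ)+1)-1 = 2*(n:ℝ)+1 by ring] at h
      rw [h]
      field_simp
    unfold Kh
    push_cast
    rw [Finset.sum_congr rfl key, Finset.sum_sub_distrib, ← Finset.mul_sum]
    have hch := cos_half d (n+1) (by omega) (by omega)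
    push_cast at hch
    rw [hch]
    unfold Kh at ih
    rw [ih (by omega)]
    rw [pow_succ]
    ring

lemma B_formula (d k : ℕ) (hk : k ≤ 2*d+1) :
    Bh d k = (-1:ℝ)^k*(Bh d 0 + 1/2 - (2*(d:ℝ)+1)*k) - 1/2 := by
  induction k with
  | zero => simp
  | succ n ih =>
    have key : ∀ j ∈ Icc 1 d, Real.cos (2*((n:ℝ)+1)*(Real.pi*j/(2*(d:ℝ)+1)))
        / Real.cos (Real.pi*j/(2*(d:ℝ)+1))^2
        = 2*(Real.cos ((2*(n:ℝ)+1)*(Real.pi*j/(2*(d:ℝ)+1))) / Real.cos (Real.pi*j/(2*(d:ℝ)+1)))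
          - Real.cos (2*(n:ℝ)*(Real.pi*j/(2*(d:ℝ)+1))) / Real.cos (Real.pi*j/(2*(d:ℝ)+1))^2 := by
      intro j hj
      simp only [Finset.mem_Icc] at hj
      set x : ℝ := Real.pi*j/(2*(d:ℝ)+1) with hx
      have hc : Real.cos x ≠ 0 := (cospos d j hj.1 hj.2).ne'
      have h := cos_rec (2*(n:ℝ)+1) x
      rw [show 2*(n:ℝ)+1+1 = 2*((n:ℝ)+1) by ring] at h
      rw [show 2*(n:ℝ)+1-1 = 2*(n:ℝ) by ring] at h
      rw [h]
      field_simp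
    unfold Bh
    push_cast
    rw [Finset.sum_congr rfl key, Finset.sum_sub_distrib, ← Finset.mul_sum]
    have hK := K_formula d n (by omega)
    unfold Kh at hK
    rw [hK]
    unfold Bh at ih
    rw [ih (by omega)]
    rw [pow_succ]
    push_cast
    ring

lemma B_per (d : ℕ) : Bh d (2*d+1) = Bh d 0 := by
  unfold Bh
  apply Finset.sum_congr rfl
  intro j hj
  simp only [Finset.mem_Icc] at hj
  have hd0 : (2*(d:ℝ)+1) ≠ 0 := by positivity
  have h1 : 2*(((2*d+1:ℕ)):ℝ)*(Real.pi*j/(2*(d:ℝ)+1)) = (j:ℝ)*(2*Real.pi) := by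
    push_cast
    field_simp
  have h2 : 2*(((0:ℕ)):ℝ)*(Real.pi*j/(2*(d:ℝ)+1)) = 0 := by push_cast; ring
  rw [h1, h2, Real.cos_zero, Real.cos_nat_mul_two_pi]

lemma B_zero (d : ℕ) (hd : 1 ≤ d) : Bh d 0 = 2*(d:ℝ)*((d:ℝ)+1) := by
  have h1 := B_formula d (2*d+1) (by omega)
  rw [B_per d] at h1
  have hodd : (-1:ℝ)^(2*d+1) = -1 := Odd.neg_one_pow ⟨d, by ring⟩
  rw [hodd] at h1
  push_cast at h1
  linarith

lemma B_closed (d k : ℕ) (hd : 1 ≤ d) (hk : k ≤ 2*d+1) :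
    Bh d k = ((-1:ℝ)^k*((2*(d:ℝ)+1)^2 - 2*(2*(d:ℝ)+1)*k) - 1)/2 := by
  rw [B_formula d k hk, B_zero d hd]
  ring

lemma L_formula (d k : ℕ) (hd : 1 ≤ d) (hk : k ≤ 2*d+1) :
    Lh d k = ((-1:ℝ)^k*((2*(d:ℝ)+1)^2 + (2*(2*(d:ℝ)+1)^2-2*(2*(d:ℝ)+1))*k
      - 2*(2*(d:ℝ)+1)*k^2) - 1)/2 := by
  induction k with
  | zero =>
    have hL0 : Lh d 0 = Bh d 0 := by
      unfold Lh Bh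
      apply Finset.sum_congr rfl
      intro j hj
      simp only [Finset.mem_Icc] at hj
      set x : ℝ := Real.pi*j/(2*(d:ℝ)+1) with hx
      have hc : Real.cos x ≠ 0 := (cospos d j hj.1 hj.2).ne'
      rw [show (2*((0:ℕ):ℝ)+1)*x = x by push_cast; ring,
          show 2*((0:ℕ):ℝ)*x = 0 by push_cast; ring, Real.cos_zero]
      field_simp
    rw [hL0, B_zero d hd]
    push_cast
    ring
  | succ n ih =>
    have key : ∀ j ∈ Icc 1 d, Real.cos ((2*((n:ℝ)+1)+1)*(Real.pi*j/(2*(d:ℝ)+1)))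
        / Real.cos (Real.pi*j/(2*(d:ℝ)+1))^3
        = 2*(Real.cos (2*((n:ℝ)+1)*(Real.pi*j/(2*(d:ℝ)+1))) / Real.cos (Real.pi*j/(2*(d:ℝ)+1))^2)
          - Real.cos ((2*(n:ℝ)+1)*(Real.pi*j/(2*(d:ℝ)+1))) / Real.cos (Real.pi*j/(2*(d:ℝ)+1))^3 := by
      intro j hj
      simp only [Finset.mem_Icc] at hj
      set x : ℝ := Real.pi*j/(2*(d:ℝ)+1) with hx
      have hc : Real.cos x ≠ 0 := (cospos d j hj.1 hj.2).ne'
      have h := cos_rec (2*((n:ℝ)+1)) x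
      rw [show 2*((n:ℝ)+1)-1 = 2*(n:ℝ)+1 by ring] at h
      rw [h]
      field_simp
    unfold Lh
    push_cast
    rw [Finset.sum_congr rfl key, Finset.sum_sub_distrib, ← Finset.mul_sum]
    have hB := B_closed d (n+1) hd (by omega)
    unfold Bh at hB
    push_cast at hB
    rw [hB]
    unfold Lh at ih
    rw [ih (by omega)]
    rw [pow_succ]
    ring

noncomputable def psiR (q k : ℝ) : ℝ :=
  (2*q+1)^2*k + ((2*q+1)^2-(2*q+1))*k*(k-1) - ((2*q+1)/3)*k*(k-1)*(2*k-1)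

lemma C_formula (d k : ℕ) (hd : 1 ≤ d) (hk : k ≤ 2*d+2) :
    Ch d k = (-1:ℝ)^k*(Ch d 0 + 1/2 - psiR d k) - 1/2 := by
  induction k with
  | zero => simp [psiR]
  | succ n ih =>
    have key : ∀ j ∈ Icc 1 d, Real.cos (2*((n:ℝ)+1)*(Real.pi*j/(2*(d:ℝ)+1)))
        / Real.cos (Real.pi*j/(2*(d:ℝ)+1))^4
        = 2*(Real.cos ((2*(n:ℝ)+1)*(Real.pi*j/(2*(d:ℝ)+1))) / Real.cos (Real.pi*j/(2*(d:ℝ)+1))^3)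
          - Real.cos (2*(n:ℝ)*(Real.pi*j/(2*(d:ℝ)+1))) / Real.cos (Real.pi*j/(2*(d:ℝ)+1))^4 := by
      intro j hj
      simp only [Finset.mem_Icc] at hj
      set x : ℝ := Real.pi*j/(2*(d:ℝ)+1) with hx
      have hc : Real.cos x ≠ 0 := (cospos d j hj.1 hj.2).ne'
      have h := cos_rec (2*(n:ℝ)+1) x
      rw [show 2*(n:ℝ)+1+1 = 2*((n:ℝ)+1) by ring] at h
      rw [show 2*(n:ℝ)+1-1 = 2*(n:ℝ) by ring] at h
      rw [h]
      field_simp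
    unfold Ch
    push_cast
    rw [Finset.sum_congr rfl key, Finset.sum_sub_distrib, ← Finset.mul_sum]
    have hL := L_formula d n hd (by omega)
    unfold Lh at hL
    rw [hL]
    unfold Ch at ih
    rw [ih (by omega)]
    rw [pow_succ]
    unfold psiR
    push_cast
    ring

lemma C_per (d : ℕ) : Ch d (2*d+1) = Ch d 0 := by
  unfold Ch
  apply Finset.sum_congr rfl
  intro j hj
  simp only [Finset.mem_Icc] at hj
  have hd0 : (2*(d:ℝ)+1) ≠ 0 := by positivity
  have h1 : 2*(((2*d+1:ℕ)):ℝ)*(Real.pi*j/(2*(d:ℝ)+1)) = (j:ℝ)*(2*Real.pi) := by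
    push_cast
    field_simp
  have h2 : 2*(((0:ℕ)):ℝ)*(Real.pi*j/(2*(d:ℝ)+1)) = 0 := by push_cast; ring
  rw [h1, h2, Real.cos_zero, Real.cos_nat_mul_two_pi]

lemma C_zero (d : ℕ) (hd : 1 ≤ d) :
    Ch d 0 = (8*(d:ℝ)^4 + 16*(d:ℝ)^3 + 16*(d:ℝ)^2 + 8*(d:ℝ))/3 := by
  have h1 := C_formula d (2*d+1) hd (by omega)
  rw [C_per d] at h1
  have hodd : (-1:ℝ)^(2*d+1) = -1 := Odd.neg_one_pow ⟨d, by ring⟩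
  rw [hodd] at h1
  unfold psiR at h1
  push_cast at h1
  nlinarith [h1]
lemma D_eval (d c : ℕ) (hd : 1 ≤ d) (hc : c ≤ d) :
    Dverl 2 c (2*d+1) = (2*(d:ℝ)+1)/4 * ((2*(c:ℝ)+1)*(2*(d:ℝ)*((d:ℝ)+1))/3
      - (2*(d:ℝ)+1)*(c:ℝ)*((c:ℝ)+1) + (c:ℝ)*((c:ℝ)+1)*(2*(c:ℝ)+1)/3) := by
  unfold Dverl
  rw [show (2*d+1-1)/2 = d by omega]
  simp only [show (2-1:ℕ) = 1 from rfl, pow_one,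
    show ((1:ℤ) - 2*((2:ℕ):ℤ)) = -3 by norm_num]
  have key : ∀ j ∈ Icc 1 d,
      Real.sin (Real.pi * (j:ℝ) * (2 * (c:ℝ) + 1) / ((2*d+1:ℕ):ℝ))
        * Real.sin (Real.pi * (j:ℝ) / ((2*d+1:ℕ):ℝ)) ^ (-3:ℤ)
      = Real.cos (2*((0:ℕ):ℝ)*(Real.pi*j/(2*(d:ℝ)+1))) / Real.sin (Real.pi*j/(2*(d:ℝ)+1))^2
        + 2 * ∑ k ∈ Icc 1 c,
            Real.cos (2*(k:ℝ)*(Real.pi*j/(2*(d:ℝ)+1))) / Real.sin (Real.pi*j/(2*(d:ℝ)+1))^2 := by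
    intro j hj
    simp only [Finset.mem_Icc] at hj
    have hcast : ((2*d+1:ℕ):ℝ) = 2*(d:ℝ)+1 := by push_cast; ring
    rw [hcast]
    set x : ℝ := Real.pi*j/(2*(d:ℝ)+1) with hx
    have hs : Real.sin x ≠ 0 := (sinpos d j hj.1 (by omega)).ne'
    have harg : Real.pi * (j:ℝ) * (2 * (c:ℝ) + 1) / (2*(d:ℝ)+1) = (2*(c:ℝ)+1)*x := by
      rw [hx]; ring
    rw [harg, dirichlet c x]
    rw [show Real.cos (2*((0:ℕ):ℝ)*x) = 1 by norm_num]
    have hz : Real.sin x ^ (-3:ℤ) = 1/(Real.sin x)^3 := by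
      rw [show (-3:ℤ) = -((3:ℕ):ℤ) by norm_num, zpow_neg, zpow_natCast, one_div]
    rw [hz, ← Finset.sum_div]
    field_simp
    ring_nf
    simp only [mul_comm x]
  rw [Finset.sum_congr rfl key, Finset.sum_add_distrib]
  have h0 : ∑ j ∈ Icc 1 d,
      Real.cos (2*((0:ℕ):ℝ)*(Real.pi*j/(2*(d:ℝ)+1))) / Real.sin (Real.pi*j/(2*(d:ℝ)+1))^2
      = Ah d 0 := rfl
  have hswap : ∑ j ∈ Icc 1 d, 2 * ∑ k ∈ Icc 1 c,
        Real.cos (2*(k:ℝ)*(Real.pi*j/(2*(d:ℝ)+1))) / Real.sin (Real.pi*j/(2*(d:ℝ)+1))^2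
      = 2 * ∑ k ∈ Icc 1 c, Ah d k := by
    rw [← Finset.mul_sum, Finset.sum_comm]
    rfl
  rw [h0, hswap]
  have hA : ∀ k ∈ Icc 1 c, Ah d k = Ah d 0 - ((2*(d:ℝ)+1)*(k:ℝ) - (k:ℝ)^2) := by
    intro k hk
    simp only [Finset.mem_Icc] at hk
    rw [A_formula d k hd (by omega)]
    ring
  rw [Finset.sum_congr rfl hA, Finset.sum_sub_distrib, Finset.sum_sub_distrib,
      Finset.sum_const, ← Finset.mul_sum, sum_Icc_id, sum_Icc_sq, A_zero d hd,
      Nat.card_Icc]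
  rw [show c + 1 - 1 = c by omega, nsmul_eq_mul]
  push_cast
  ring

lemma delta_eval (d c : ℕ) (hd : 1 ≤ d) (hc : c ≤ 2*d+1) :
    deltaVerl 2 c (2*d+1) = (2*((8*(d:ℝ)^4+16*(d:ℝ)^3+16*(d:ℝ)^2+8*(d:ℝ))/3) + 1
      - psiR d c - psiR d ((c:ℝ)+1))/(8*(2*(d:ℝ)+1)) := by
  unfold deltaVerl
  rw [show (2*d+1-1)/2 = d by omega]
  simp only [show ((1:ℤ) - ((2:ℕ):ℤ)) = -1 by norm_num,
             show (-(2*((2:ℕ):ℤ))) = -4 by norm_num]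
  have key : ∀ j ∈ Icc 1 d,
      Real.sin (Real.pi * (j:ℝ) * (2 * (c:ℝ) + 1) / ((2*d+1:ℕ):ℝ))
        * Real.sin (Real.pi * (j:ℝ) / ((2*d+1:ℕ):ℝ))
        * Real.cos (Real.pi * (j:ℝ) / ((2*d+1:ℕ):ℝ)) ^ (-4:ℤ)
      = (1/2) * (Real.cos (2*(c:ℝ)*(Real.pi*j/(2*(d:ℝ)+1))) / Real.cos (Real.pi*j/(2*(d:ℝ)+1))^4)
        - (1/2) * (Real.cos (2*((c+1:ℕ):ℝ)*(Real.pi*j/(2*(d:ℝ)+1))) / Real.cos (Real.pi*j/(2*(d:ℝ)+1))^4) := by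
    intro j hj
    simp only [Finset.mem_Icc] at hj
    have hcast : ((2*d+1:ℕ):ℝ) = 2*(d:ℝ)+1 := by push_cast; ring
    rw [hcast]
    set x : ℝ := Real.pi*j/(2*(d:ℝ)+1) with hx
    have harg : Real.pi * (j:ℝ) * (2 * (c:ℝ) + 1) / (2*(d:ℝ)+1) = (2*(c:ℝ)+1)*x := by
      rw [hx]; ring
    have hprod : Real.sin ((2*(c:ℝ)+1)*x) * Real.sin x
        = (Real.cos (2*(c:ℝ)*x) - Real.cos (2*((c+1:ℕ):ℝ)*x))/2 := by
      have h1 : Real.cos (2*(c:ℝ)*x) = Real.cos ((2*(c:ℝ)+1)*x - x) := by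
        congr 1; ring
      have h2 : Real.cos (2*((c+1:ℕ):ℝ)*x) = Real.cos ((2*(c:ℝ)+1)*x + x) := by
        congr 1; push_cast; ring
      rw [h1, h2, Real.cos_sub, Real.cos_add]
      ring
    have hz : Real.cos x ^ (-4:ℤ) = 1/(Real.cos x)^4 := by
      rw [show (-4:ℤ) = -((4:ℕ):ℤ) by norm_num, zpow_neg, zpow_natCast, one_div]
    rw [harg, hz]
    linear_combination (1/(Real.cos x)^4) * hprod
  rw [Finset.sum_congr rfl key, Finset.sum_sub_distrib, ← Finset.mul_sum, ← Finset.mul_sum]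
  have hCc : ∑ j ∈ Icc 1 d,
      Real.cos (2*(c:ℝ)*(Real.pi*j/(2*(d:ℝ)+1))) / Real.cos (Real.pi*j/(2*(d:ℝ)+1))^4 = Ch d c := rfl
  have hCc1 : ∑ j ∈ Icc 1 d,
      Real.cos (2*((c+1:ℕ):ℝ)*(Real.pi*j/(2*(d:ℝ)+1))) / Real.cos (Real.pi*j/(2*(d:ℝ)+1))^4
      = Ch d (c+1) := rfl
  rw [hCc, hCc1, C_formula d c hd (by omega), C_formula d (c+1) hd (by omega), C_zero d hd]
  rw [pow_succ]
  rw [show ((4:ℝ)^(-1:ℤ)) = 1/4 by norm_num]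
  push_cast
  have hden : (2*(d:ℝ)+1) ≠ 0 := by positivity
  rcases Nat.even_or_odd c with hce | hco
  · rw [hce.neg_one_pow]
    field_simp
    have h1 : ((-1:ℝ))^c = 1 := hce.neg_one_pow
    linear_combination (24 + 128*(d:ℝ) + 256*(d:ℝ)^2 + 256*(d:ℝ)^3 + 128*(d:ℝ)^4 - 48*psiR (d:ℝ) ((c:ℝ) + 1)) * h1
  · rw [hco.neg_one_pow]
    field_simp
    have h1 : ((-1:ℝ))^c = -1 := hco.neg_one_pow
    linear_combination (-(24 + 128*(d:ℝ) + 256*(d:ℝ)^2 + 256*(d:ℝ)^3 + 128*(d:ℝ)^4 - 48*psiR (d:ℝ) ((c:ℝ) + 1))) * h1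


/-- In rank `g = 2`:
`(1/2)·(D_2^{(2c)}(p) - δ_2^{(2c)}(p)) = (1/24)·c·(p-1)·(p-2c-1)·(p-c-1)`. -/
theorem stmt19 (p d c : ℕ) (hp : p.Prime) (hp5 : 5 ≤ p) (hd : d = (p - 1) / 2)
    (hc1 : 1 ≤ c) (hc : c ≤ d - 1) :
    1 / 2 * (Dverl 2 c p - deltaVerl 2 c p) =
      1 / 24 * (c : ℝ) * ((p : ℝ) - 1) * ((p : ℝ) - 2 * c - 1) * ((p : ℝ) - c - 1) := by
  have hodd : Odd p := hp.odd_of_ne_two (by omega)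
  obtain ⟨m, hm⟩ := hodd
  have hpd : p = 2*d+1 := by omega
  have hd2 : 2 ≤ d := by omega
  have hcd : c + 1 ≤ d := by omega
  rw [hpd, D_eval d c (by omega) (by omega), delta_eval d c (by omega) (by omega)]
  unfold psiR
  push_cast
  have hden : (2*(d:ℝ)+1) ≠ 0 := by positivity
  field_simp
  ring
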